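/- (1) For each n-data (a,b,κ) for A, the operator L(A,a,b,κ) is a balanced rank n singular perturbation of A. (2) Conversely, every balanced rank n singular perturbation of A has the form L(A,a,b,κ) for some n-data (a,b,κ). -/

import Mathlib

set_option linter.unusedSectionVars false
set_option maxHeartbeats 1000000


open Complex

noncomputable section

variable {H : Type*} [NormedAddCommGroup H] [InnerProductSpace ℂ H] [CompleteSpace H]

/-- The graph of the singular perturbation `L(T, a, b, κ)` of an (unbounded) operator with
domain `dom` and action `Tfun`, built from the `n`-data `(ã, b̃, κ)`:
pairs `(y₀ + ãc, T y₀)` with `y₀ ∈ dom`, `c ∈ ℂⁿ` and `κc + (⟨T y₀, b̃ e_j⟩)_j = 0`. -/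
def pertGraph (n : ℕ) (dom : Submodule ℂ H) (Tfun : dom → H)
    (aT bT : (Fin n → ℂ) →ₗ[ℂ] H) (κ : Matrix (Fin n) (Fin n) ℂ) : Set (H × H) :=
  {p | ∃ (y₀ : dom) (c : Fin n → ℂ),
    p.1 = (y₀ : H) + aT c ∧ p.2 = Tfun y₀ ∧
    ∀ j, κ.mulVec c j + inner (𝕜 := ℂ) (bT (Pi.single j 1)) (Tfun y₀) = 0}

/-- Condition `(Aₙ)` on the `n`-data `(ã, b̃, κ)` for the operator `A`:
if `ãc ∈ D(A)` and `κc = (⟨A(ãc), b̃e_j⟩)_j`, then `c = 0`. -/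
def CondA (n : ℕ) (A : H →ₗ.[ℂ] H)
    (aT bT : (Fin n → ℂ) →ₗ[ℂ] H) (κ : Matrix (Fin n) (Fin n) ℂ) : Prop :=
  ∀ (c : Fin n → ℂ) (h : aT c ∈ A.domain),
    (∀ j, κ.mulVec c j = inner (𝕜 := ℂ) (bT (Pi.single j 1)) (A ⟨aT c, h⟩)) → c = 0

/-- `dim (G / (G ∩ G')) = n`, where the intersection is viewed inside `G`. -/
def QuotRankEq (G G' : Submodule ℂ (H × H)) (n : ℕ) : Prop :=
  Module.rank ℂ (↥G ⧸ (G ⊓ G').comap G.subtype) = (n : Cardinal)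

/-- `L` is a balanced rank `n` singular perturbation of `A` (in terms of their graphs). -/
def IsBalancedPert (n : ℕ) (Ga Gl : Submodule ℂ (H × H)) : Prop :=
  QuotRankEq Ga Gl n ∧ QuotRankEq Gl Ga n
/-- The evaluation map `v ↦ (⟨bT e_j, v⟩)_j`. -/
def innerL (n : ℕ) (bT : (Fin n → ℂ) →ₗ[ℂ] H) : H →ₗ[ℂ] (Fin n → ℂ) :=
  LinearMap.pi fun j => ((innerSL ℂ (bT (Pi.single j 1))) : H →ₗ[ℂ] ℂ)

lemma innerL_apply (n : ℕ) (bT : (Fin n → ℂ) →ₗ[ℂ] H) (v : H) (j : Fin n) :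
    innerL n bT v j = inner (𝕜 := ℂ) (bT (Pi.single j 1)) v := rfl

lemma innerL_surjective {n : ℕ} {bT : (Fin n → ℂ) →ₗ[ℂ] H}
    (hb : Function.Injective bT) : Function.Surjective (innerL n bT) := by
  set v : Fin n → H := fun j => bT (Pi.single j 1) with hv
  have hbT : ∀ c : Fin n → ℂ, bT c = ∑ j, c j • v j := by
    intro c
    have h := LinearMap.pi_apply_eq_sum_univ bT c
    have harg : ∀ i : Fin n, (fun j => if i = j then (1:ℂ) else 0) = Pi.single i 1 := by
      intro i; funext j; simp [Pi.single_apply, eq_comm]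
    simp only [harg] at h
    exact h
  have hli : LinearIndependent ℂ v := by
    rw [Fintype.linearIndependent_iff]
    intro c hc
    have : bT c = bT 0 := by rw [hbT, hc, map_zero]
    have hc0 := hb this
    intro i; rw [hc0]; rfl
  set W := Submodule.span ℂ (Set.range v) with hW
  haveI : FiniteDimensional ℂ W := FiniteDimensional.span_of_finite ℂ (Set.finite_range v)
  set φ : W →ₗ[ℂ] (Fin n → ℂ) := (innerL n bT).comp W.subtype with hφ
  have hinj : Function.Injective φ := by
    rw [← LinearMap.ker_eq_bot]
    rw [Submodule.eq_bot_iff]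
    rintro ⟨w, hw⟩ hker
    obtain ⟨a, ha⟩ := (Submodule.mem_span_range_iff_exists_fun ℂ).1 hw
    have hz : ∀ j, inner (𝕜 := ℂ) (v j) w = 0 := by
      intro j
      have := congrFun (LinearMap.mem_ker.1 hker) j
      simpa [hφ, innerL_apply] using this
    have : (inner (𝕜 := ℂ) w w) = 0 := by
      calc inner (𝕜 := ℂ) w w = inner (𝕜 := ℂ) (∑ i, a i • v i) w := by rw [ha]
        _ = ∑ i, inner (𝕜 := ℂ) (a i • v i) w := by rw [sum_inner]
        _ = 0 := by
            refine Finset.sum_eq_zero fun i _ => ?_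
            rw [inner_smul_left, hz i, mul_zero]
    have : w = 0 := inner_self_eq_zero.1 this
    exact Subtype.ext this
  have hrange : LinearMap.range φ = ⊤ := by
    apply Submodule.eq_top_of_finrank_eq
    rw [LinearMap.finrank_range_of_inj hinj]
    rw [finrank_span_eq_card hli, Module.finrank_fintype_fun_eq_card]
  intro d
  have : d ∈ LinearMap.range φ := hrange ▸ Submodule.mem_top
  obtain ⟨w, hw⟩ := this
  exact ⟨(w : H), hw⟩


/-- `pertGraph` of a `LinearPMap` is a submodule. -/
def pertSub (n : ℕ) (A : H →ₗ.[ℂ] H) (aT bT : (Fin n → ℂ) →ₗ[ℂ] H)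
    (κ : Matrix (Fin n) (Fin n) ℂ) : Submodule ℂ (H × H) where
  carrier := pertGraph n A.domain (fun y₀ => A y₀) aT bT κ
  zero_mem' := ⟨0, 0, by simp, by simp [A.map_zero], fun j => by
    simp [Matrix.mulVec_zero, A.map_zero]⟩
  add_mem' := by
    rintro p q ⟨y₀, c, h1, h2, h3⟩ ⟨y₀', c', h1', h2', h3'⟩
    refine ⟨y₀ + y₀', c + c', ?_, ?_, ?_⟩
    · show p.1 + q.1 = _
      rw [h1, h1', Submodule.coe_add, map_add]
      exact add_add_add_comm _ _ _ _
    · show p.2 + q.2 = _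
      rw [h2, h2']
      exact (A.map_add y₀ y₀').symm
    · intro j
      have e1 := h3 j
      have e2 := h3' j
      beta_reduce at e1 e2 ⊢
      rw [Matrix.mulVec_add, A.map_add, inner_add_right]
      rw [Pi.add_apply]
      linear_combination e1 + e2
  smul_mem' := by
    rintro s p ⟨y₀, c, h1, h2, h3⟩
    refine ⟨s • y₀, s • c, ?_, ?_, ?_⟩
    · show s • p.1 = _
      rw [h1, Submodule.coe_smul, map_smul, smul_add]
    · show s • p.2 = _
      rw [h2]
      exact (A.map_smul s y₀).symm
    · intro j
      have e1 := h3 j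
      beta_reduce at e1 ⊢
      rw [Matrix.mulVec_smul, A.map_smul, inner_smul_right]
      rw [Pi.smul_apply, smul_eq_mul]
      linear_combination s * e1

lemma mem_pertSub {n : ℕ} {A : H →ₗ.[ℂ] H} {aT bT : (Fin n → ℂ) →ₗ[ℂ] H}
    {κ : Matrix (Fin n) (Fin n) ℂ} {p : H × H} :
    p ∈ pertSub n A aT bT κ ↔
      ∃ (y₀ : A.domain) (c : Fin n → ℂ),
        p.1 = (y₀ : H) + aT c ∧ p.2 = A y₀ ∧
        ∀ j, κ.mulVec c j + inner (𝕜 := ℂ) (bT (Pi.single j 1)) (A y₀) = 0 :=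
  Iff.rfl


lemma quotRankEq_of_map {n : ℕ} {G G' : Submodule ℂ (H × H)} (φ : ↥G →ₗ[ℂ] (Fin n → ℂ))
    (hker : LinearMap.ker φ = (G ⊓ G').comap G.subtype)
    (hsurj : Function.Surjective φ) : QuotRankEq G G' n := by
  unfold QuotRankEq
  have e1 := Submodule.quotEquivOfEq _ _ hker
  have e2 := φ.quotKerEquivOfSurjective hsurj
  have h2 := (e1.symm.trans e2).lift_rank_eq
  rw [rank_fun' (R := ℂ) (η := Fin n)] at h2
  simp only [Fintype.card_fin, Cardinal.lift_natCast] at h2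
  exact Cardinal.lift_eq_nat_iff.1 h2


lemma part1_main {n : ℕ} (A : H →ₗ.[ℂ] H) (Ainv : H →L[ℂ] H)
    (hAinv1 : ∀ x : A.domain, Ainv (A x) = (x : H))
    (hAinv2 : ∀ v : H, ∃ h : Ainv v ∈ A.domain, A ⟨Ainv v, h⟩ = v)
    (aT bT : (Fin n → ℂ) →ₗ[ℂ] H) (κ : Matrix (Fin n) (Fin n) ℂ)
    (ha : Function.Injective aT) (hb : Function.Injective bT)
    (hcond : CondA n A aT bT κ) :
    ∃ L : H →ₗ.[ℂ] H,
      (L.graph : Set (H × H)) = pertGraph n A.domain (fun y₀ => A y₀) aT bT κ ∧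
      QuotRankEq A.graph L.graph n ∧ QuotRankEq L.graph A.graph n := by
  set S := pertSub n A aT bT κ with hS
  -- the graph condition
  have hg : ∀ x ∈ S, x.1 = 0 → x.2 = 0 := by
    rintro x ⟨y₀, c, h1, h2, h3⟩ hx1
    beta_reduce at h2 h3
    have haTc : aT c = -(y₀ : H) := by
      refine eq_neg_of_add_eq_zero_right ?_
      rw [← h1, hx1]
    have h : aT c ∈ A.domain := haTc ▸ A.domain.neg_mem y₀.2
    have hsub : (⟨aT c, h⟩ : A.domain) = -y₀ := Subtype.ext (by simp [haTc])
    have hA : A ⟨aT c, h⟩ = -(A y₀) := by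
      rw [hsub, ← neg_one_smul ℂ y₀, A.map_smul, neg_one_smul]
    have hc : c = 0 := by
      refine hcond c h fun j => ?_
      rw [hA, inner_neg_right]
      linear_combination h3 j
    have hy0 : (y₀ : H) = 0 := by
      have : aT c = 0 := by rw [hc, map_zero]
      rw [this] at haTc
      simpa using haTc.symm
    have : y₀ = 0 := Subtype.ext hy0
    rw [h2, this, A.map_zero]
  have hLg : (S.toLinearPMap).graph = S := Submodule.toLinearPMap_graph_eq S hg
  refine ⟨S.toLinearPMap, ?_, ?_, ?_⟩
  · rw [hLg]; rfl
  · -- A-side rank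
    rw [hLg]
    set φA : ↥A.graph →ₗ[ℂ] (Fin n → ℂ) :=
      (innerL n bT).comp ((LinearMap.snd ℂ H H).comp A.graph.subtype) with hφA
    have hφA_apply : ∀ x : ↥A.graph, ∀ j, φA x j =
        inner (𝕜 := ℂ) (bT (Pi.single j 1)) ((x : H × H).2) := fun x j => rfl
    have hker : LinearMap.ker φA = (A.graph ⊓ S).comap A.graph.subtype := by
      ext x
      constructor
      · intro hx
        have hz : ∀ j, inner (𝕜 := ℂ) (bT (Pi.single j 1)) ((x : H × H).2) = 0 :=
          fun j => by rw [← hφA_apply x j]; rw [LinearMap.mem_ker.1 hx]; rfl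
        refine Submodule.mem_comap.2 (Submodule.mem_inf.2 ⟨x.2, ?_⟩)
        obtain ⟨y, hy1, hy2⟩ := A.mem_graph_iff.1 x.2
        refine mem_pertSub.2 ⟨y, 0, ?_, ?_, fun j => ?_⟩
        · show (x : H × H).1 = _
          rw [← hy1]; simp
        · show (x : H × H).2 = _
          exact hy2.symm
        · rw [Matrix.mulVec_zero, hy2]
          simpa using hz j
      · intro hx
        have hx' := Submodule.mem_comap.1 hx
        obtain ⟨y₀, c, h1, h2, h3⟩ := mem_pertSub.1 (Submodule.mem_inf.1 hx').2
        simp only [Submodule.subtype_apply] at h1 h2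
        obtain ⟨y, hy1, hy2⟩ := A.mem_graph_iff.1 x.2
        have hyy : (y : H) = (y₀ : H) := by
          have : Ainv (A y) = Ainv (A y₀) := by rw [hy2, ← h2]
          rwa [hAinv1, hAinv1] at this
        have hc : c = 0 := by
          apply ha
          rw [map_zero]
          have : (y₀ : H) = (y₀ : H) + aT c := by rw [← h1, ← hy1, hyy]
          exact (left_eq_add.1 this)
        refine LinearMap.mem_ker.2 (funext fun j => ?_)
        simp only [Pi.zero_apply]
        rw [hφA_apply x j, h2]
        have := h3 j
        rw [hc, Matrix.mulVec_zero] at this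
        simpa using this
    have hsurj : Function.Surjective φA := by
      intro d
      obtain ⟨w, hw⟩ := innerL_surjective hb d
      obtain ⟨hmem, hval⟩ := hAinv2 w
      refine ⟨⟨(Ainv w, w), A.mem_graph_iff.2 ⟨⟨Ainv w, hmem⟩, rfl, hval⟩⟩, ?_⟩
      exact hw
    exact quotRankEq_of_map φA hker hsurj
  · -- L-side rank
    rw [hLg]
    obtain ⟨gl, hgl⟩ := aT.exists_leftInverse_of_injective (LinearMap.ker_eq_bot.2 ha)
    have hgla : ∀ c, gl (aT c) = c := fun c => by
      have := LinearMap.congr_fun hgl c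
      simpa using this
    set δ : H × H →ₗ[ℂ] H :=
      (LinearMap.fst ℂ H H) - ((Ainv : H →ₗ[ℂ] H).comp (LinearMap.snd ℂ H H)) with hδ
    set τ : ↥S →ₗ[ℂ] (Fin n → ℂ) := gl.comp (δ.comp S.subtype) with hτ
    have hτval : ∀ (x : ↥S) (y₀ : A.domain) (c : Fin n → ℂ),
        (x : H × H).1 = (y₀ : H) + aT c → (x : H × H).2 = A y₀ → τ x = c := by
      intro x y₀ c h1 h2
      have hδx : δ (x : H × H) = aT c := by
        simp only [hδ, LinearMap.sub_apply, LinearMap.coe_comp, Function.comp_apply,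
          LinearMap.fst_apply, LinearMap.snd_apply, ContinuousLinearMap.coe_coe]
        rw [h1, h2, hAinv1]
        abel
      show gl (δ ((x : H × H))) = c
      rw [hδx, hgla]
    have hker : LinearMap.ker τ = (S ⊓ A.graph).comap S.subtype := by
      ext x
      constructor
      · intro hx
        obtain ⟨y₀, c, h1, h2, h3⟩ := mem_pertSub.1 x.2
        have hc : c = 0 := by
          rw [← hτval x y₀ c h1 h2]
          exact LinearMap.mem_ker.1 hx
        refine Submodule.mem_comap.2 (Submodule.mem_inf.2 ⟨x.2, ?_⟩)
        refine A.mem_graph_iff.2 ⟨y₀, ?_, ?_⟩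
        · show (y₀ : H) = (x : H × H).1
          rw [h1, hc, map_zero, add_zero]
        · show A y₀ = (x : H × H).2
          exact h2.symm
      · intro hx
        have hx' := Submodule.mem_comap.1 hx
        obtain ⟨y₀, c, h1, h2, h3⟩ := mem_pertSub.1 (Submodule.mem_inf.1 hx').1
        simp only [Submodule.subtype_apply] at h1 h2
        obtain ⟨y, hy1, hy2⟩ := A.mem_graph_iff.1 (Submodule.mem_inf.1 hx').2
        simp only [Submodule.subtype_apply] at hy1 hy2
        have hyy : (y : H) = (y₀ : H) := by
          have : Ainv (A y) = Ainv (A y₀) := by rw [hy2, ← h2]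
          rwa [hAinv1, hAinv1] at this
        have hc : c = 0 := by
          apply ha
          rw [map_zero]
          have : (y₀ : H) = (y₀ : H) + aT c := by rw [← h1, ← hy1, hyy]
          exact (left_eq_add.1 this)
        refine LinearMap.mem_ker.2 ?_
        rw [hτval x y₀ c h1 h2, hc]
    have hsurj : Function.Surjective τ := by
      intro c
      obtain ⟨w, hw⟩ := innerL_surjective hb (fun j => -(κ.mulVec c j))
      obtain ⟨hmem, hval⟩ := hAinv2 w
      set y₀ : A.domain := ⟨Ainv w, hmem⟩ with hy₀
      have hp : ((y₀ : H) + aT c, w) ∈ S := by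
        refine mem_pertSub.2 ⟨y₀, c, rfl, hval.symm, fun j => ?_⟩
        have := congrFun hw j
        rw [innerL_apply] at this
        rw [hval]
        rw [this]
        ring
      exact ⟨⟨_, hp⟩, hτval ⟨_, hp⟩ y₀ c rfl hval.symm⟩
    exact quotRankEq_of_map τ hker hsurj

lemma part2_main {n : ℕ} (A : H →ₗ.[ℂ] H)
    (hclosed : IsClosed (A.graph : Set (H × H)))
    (Ainv : H →L[ℂ] H)
    (hAinv1 : ∀ x : A.domain, Ainv (A x) = (x : H))
    (hAinv2 : ∀ v : H, ∃ h : Ainv v ∈ A.domain, A ⟨Ainv v, h⟩ = v)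
    (L : H →ₗ.[ℂ] H) (hLclosed : IsClosed (L.graph : Set (H × H)))
    (hbal1 : QuotRankEq A.graph L.graph n) (hbal2 : QuotRankEq L.graph A.graph n) :
    ∃ (aT bT : (Fin n → ℂ) →ₗ[ℂ] H) (κ : Matrix (Fin n) (Fin n) ℂ),
      Function.Injective aT ∧ Function.Injective bT ∧ CondA n A aT bT κ ∧
      (L.graph : Set (H × H)) = pertGraph n A.domain (fun y₀ => A y₀) aT bT κ := by
  classical
  set G : Submodule ℂ (H × H) := A.graph ⊓ L.graph with hG
  have hgr : ∀ p ∈ A.graph, p.1 = Ainv p.2 := by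
    intro p hp
    obtain ⟨y, hy1, hy2⟩ := A.mem_graph_iff.1 hp
    rw [← hy1, ← hy2, hAinv1]
  set M : Submodule ℂ H := G.map (LinearMap.snd ℂ H H) with hM
  have hMmem : ∀ v : H, v ∈ M ↔ (Ainv v, v) ∈ G := by
    intro v
    constructor
    · rintro ⟨q, hq, rfl⟩
      have h1 := hgr q (Submodule.mem_inf.1 hq).1
      have : ((Ainv ((LinearMap.snd ℂ H H) q), (LinearMap.snd ℂ H H) q) : H × H) = q := by
        rw [LinearMap.snd_apply, ← h1]
      rw [this]
      exact hq
    · intro hv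
      exact ⟨(Ainv v, v), hv, rfl⟩
  have hMclosed : IsClosed (M : Set H) := by
    have hset : (M : Set H) = (fun v => (Ainv v, v)) ⁻¹' (G : Set (H × H)) := by
      ext v
      simp only [SetLike.mem_coe, Set.mem_preimage]
      exact hMmem v
    rw [hset]
    have hGc : IsClosed (G : Set (H × H)) := by
      rw [hG, Submodule.coe_inf]
      exact hclosed.inter hLclosed
    exact hGc.preimage (Ainv.continuous.prodMk continuous_id)
  haveI : CompleteSpace M := hMclosed.completeSpace_coe
  -- the linear equivalence A.graph ≃ H via the second coordinate
  have hbij : Function.Bijective ((LinearMap.snd ℂ H H).comp A.graph.subtype) := by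
    constructor
    · intro x y hxy
      simp only [LinearMap.coe_comp, Function.comp_apply, LinearMap.snd_apply,
        Submodule.subtype_apply] at hxy
      apply Subtype.ext
      have h1 := hgr _ x.2
      have h2 := hgr _ y.2
      exact Prod.ext (by rw [h1, h2, hxy]) hxy
    · intro v
      obtain ⟨hmem, hval⟩ := hAinv2 v
      exact ⟨⟨(Ainv v, v), A.mem_graph_iff.2 ⟨⟨Ainv v, hmem⟩, rfl, hval⟩⟩, rfl⟩
  set e : ↥A.graph ≃ₗ[ℂ] H := LinearEquiv.ofBijective _ hbij with he
  have heapply : ∀ x : ↥A.graph, e x = (x : H × H).2 := fun x => rfl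
  have hmapGA : ((A.graph ⊓ L.graph).comap A.graph.subtype).map (e : ↥A.graph →ₗ[ℂ] H) = M := by
    ext v
    constructor
    · rintro ⟨x, hx, rfl⟩
      exact ⟨(x : H × H), Submodule.mem_comap.1 hx, rfl⟩
    · intro hv
      have hvG := (hMmem v).1 hv
      refine ⟨⟨(Ainv v, v), (Submodule.mem_inf.1 hvG).1⟩, Submodule.mem_comap.2 hvG, rfl⟩
  have equot : (↥A.graph ⧸ (A.graph ⊓ L.graph).comap A.graph.subtype) ≃ₗ[ℂ] (H ⧸ M) :=
    Submodule.Quotient.equiv _ _ e hmapGA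
  have hrankM : Module.rank ℂ (H ⧸ M) = n := by rw [← equot.rank_eq]; exact hbal1
  have hcompl : IsCompl M Mᗮ := Submodule.isCompl_orthogonal_of_hasOrthogonalProjection
  have hrankMp : Module.rank ℂ ↥Mᗮ = n := by
    rw [← (Submodule.quotientEquivOfIsCompl M Mᗮ hcompl).rank_eq]; exact hrankM
  haveI : Module.Finite ℂ ↥Mᗮ := Module.finite_of_rank_eq_nat hrankMp
  have hfinMp : Module.finrank ℂ ↥Mᗮ = n := Module.finrank_eq_of_rank_eq hrankMp
  set bB : Module.Basis (Fin n) ℂ ↥Mᗮ := Module.finBasisOfFinrankEq ℂ ↥Mᗮ hfinMp with hbB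
  set bT : (Fin n → ℂ) →ₗ[ℂ] H := Mᗮ.subtype.comp bB.equivFun.symm.toLinearMap with hbT
  have hbTsingle : ∀ j, bT (Pi.single j 1) = (bB j : H) := by
    intro j
    have h1 : bB.equivFun.symm (Pi.single j 1) = bB j := by
      rw [Module.Basis.equivFun_symm_apply]
      rw [Finset.sum_eq_single j]
      · simp
      · intro i _ hij
        simp [Pi.single_apply, hij]
      · intro hj
        exact absurd (Finset.mem_univ j) hj
    simp only [hbT, LinearMap.coe_comp, Function.comp_apply, LinearEquiv.coe_coe,
      Submodule.subtype_apply]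
    rw [h1]
  have hbinj : Function.Injective bT := by
    rw [hbT, LinearMap.coe_comp]
    exact (Mᗮ.injective_subtype).comp (by
      simp only [LinearEquiv.coe_coe]
      exact bB.equivFun.symm.injective)
  have hMinner : ∀ v : H, v ∈ M ↔ ∀ j, inner (𝕜 := ℂ) ((bB j : H)) v = 0 := by
    intro v
    constructor
    · intro hv j
      exact Submodule.inner_left_of_mem_orthogonal hv (bB j).2
    · intro hz
      have hvo : v ∈ Mᗮᗮ := by
        rw [Submodule.mem_orthogonal]
        intro w hw
        have hrepr := bB.sum_equivFun ⟨w, hw⟩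
        have hcoe : w = ((∑ j, bB.equivFun ⟨w, hw⟩ j • bB j : ↥Mᗮ) : H) := by
          rw [hrepr]
        rw [hcoe]
        rw [Submodule.coe_sum]
        rw [sum_inner]
        refine Finset.sum_eq_zero fun j _ => ?_
        rw [Submodule.coe_smul, inner_smul_left, hz j, mul_zero]
      rwa [Submodule.orthogonal_orthogonal] at hvo
  -- the L-graph side
  set K : Submodule ℂ ↥L.graph := (L.graph ⊓ A.graph).comap L.graph.subtype with hK
  have hrankQ : Module.rank ℂ (↥L.graph ⧸ K) = n := hbal2
  haveI : Module.Finite ℂ (↥L.graph ⧸ K) := Module.finite_of_rank_eq_nat hrankQ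
  have hfinQ : Module.finrank ℂ (↥L.graph ⧸ K) = n := Module.finrank_eq_of_rank_eq hrankQ
  set qB : Module.Basis (Fin n) ℂ (↥L.graph ⧸ K) := Module.finBasisOfFinrankEq ℂ _ hfinQ with hqB
  have hchoice : ∀ i : Fin n, ∃ x : ↥L.graph, K.mkQ x = qB i := fun i =>
    Submodule.mkQ_surjective K (qB i)
  choose X hX using hchoice
  set Y : Fin n → A.domain := fun i => ⟨Ainv ((X i) : H × H).2, (hAinv2 _).1⟩ with hY
  have hAY : ∀ i, A (Y i) = ((X i) : H × H).2 := fun i => (hAinv2 _).2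
  set u : Fin n → H := fun i => ((X i) : H × H).1 - (Y i : H) with hu
  set aT : (Fin n → ℂ) →ₗ[ℂ] H := Fintype.linearCombination ℂ u with haT
  have haTapply : ∀ c, aT c = ∑ i, c i • u i := fun c => rfl
  set κ : Matrix (Fin n) (Fin n) ℂ :=
    fun j i => -(inner (𝕜 := ℂ) ((bB j : H)) (((X i) : H × H).2)) with hκ
  have hκvec : ∀ (c : Fin n → ℂ) j,
      κ.mulVec c j = -∑ i, c i * inner (𝕜 := ℂ) ((bB j : H)) (((X i) : H × H).2) := by
    intro c j
    simp only [hκ, Matrix.mulVec, dotProduct]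
    rw [← Finset.sum_neg_distrib]
    exact Finset.sum_congr rfl fun i _ => by ring
  -- linear independence of the classes of X i
  have hindep : ∀ c : Fin n → ℂ, (∑ i, c i • X i) ∈ K → c = 0 := by
    intro c hc
    have h0 : K.mkQ (∑ i, c i • X i) = 0 := (Submodule.Quotient.mk_eq_zero K).2 hc
    rw [map_sum] at h0
    simp only [map_smul, hX] at h0
    have hli := qB.linearIndependent
    rw [Fintype.linearIndependent_iff] at hli
    exact funext fun i => hli c h0 i
  -- A applied to sums
  have hAlin : ∀ c : Fin n → ℂ, A (∑ i, c i • Y i) = ∑ i, c i • A (Y i) := by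
    intro c
    have h1 : A.toFun (∑ i, c i • Y i) = ∑ i, A.toFun (c i • Y i) :=
      map_sum A.toFun _ _
    have h2 : ∀ i, A.toFun (c i • Y i) = c i • A.toFun (Y i) := fun i =>
      A.toFun.map_smul _ _
    calc A (∑ i, c i • Y i) = A.toFun (∑ i, c i • Y i) := rfl
      _ = ∑ i, A.toFun (c i • Y i) := h1
      _ = ∑ i, c i • A (Y i) := by
          refine Finset.sum_congr rfl fun i _ => ?_
          rw [h2 i]
          rfl
  -- coordinates of sums of X's
  have hXsum1 : ∀ c : Fin n → ℂ,
      ((∑ i, c i • X i : ↥L.graph) : H × H).1 = ∑ i, c i • ((X i : H × H)).1 := by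
    intro c
    rw [Submodule.coe_sum, Prod.fst_sum]
    refine Finset.sum_congr rfl fun i _ => ?_
    rw [Submodule.coe_smul, Prod.smul_fst]
  have hXsum2 : ∀ c : Fin n → ℂ,
      ((∑ i, c i • X i : ↥L.graph) : H × H).2 = ∑ i, c i • ((X i : H × H)).2 := by
    intro c
    rw [Submodule.coe_sum, Prod.snd_sum]
    refine Finset.sum_congr rfl fun i _ => ?_
    rw [Submodule.coe_smul, Prod.smul_snd]
  -- sums of X's lying in A.graph force zero coefficients
  have hXA : ∀ (c : Fin n → ℂ) (s : A.domain),
      ((∑ i, c i • X i : ↥L.graph) : H × H) = ((s : H), A s) → c = 0 := by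
    intro c s hs
    apply hindep c
    refine Submodule.mem_comap.2 (Submodule.mem_inf.2 ⟨(∑ i, c i • X i : ↥L.graph).2, ?_⟩)
    show ((∑ i, c i • X i : ↥L.graph) : H × H) ∈ A.graph
    rw [hs]
    exact A.mem_graph s
  have hainj : Function.Injective aT := by
    rw [← LinearMap.ker_eq_bot, Submodule.eq_bot_iff]
    intro c hc
    rw [LinearMap.mem_ker, haTapply] at hc
    have h' : ∑ i, c i • ((X i : H × H)).1 = ∑ i, c i • ((Y i : A.domain) : H) := by
      simp only [hu, smul_sub] at hc
      rw [Finset.sum_sub_distrib, sub_eq_zero] at hc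
      exact hc
    have hfst : ((∑ i, c i • X i : ↥L.graph) : H × H).1 = ((∑ i, c i • Y i : A.domain) : H) := by
      rw [hXsum1, h', Submodule.coe_sum]
      exact Finset.sum_congr rfl fun i _ => by rw [Submodule.coe_smul]
    have hsnd : ((∑ i, c i • X i : ↥L.graph) : H × H).2 = A (∑ i, c i • Y i) := by
      rw [hXsum2, hAlin]
      exact Finset.sum_congr rfl fun i _ => by rw [hAY i]
    exact hXA c (∑ i, c i • Y i) (Prod.ext hfst hsnd)
  have hcond : CondA n A aT bT κ := by
    intro c h hyp
    have hyp' : ∀ j, κ.mulVec c j = inner (𝕜 := ℂ) ((bB j : H)) (A ⟨aT c, h⟩) := fun j => by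
      rw [← hbTsingle j]; exact hyp j
    set s : A.domain := ∑ i, c i • Y i with hs
    set w : A.domain := ⟨aT c, h⟩ + s with hw
    have hw1 : (w : H) = ∑ i, c i • ((X i : H × H)).1 := by
      rw [hw, Submodule.coe_add, hs, Submodule.coe_sum]
      have h1 : ((⟨aT c, h⟩ : A.domain) : H) = aT c := rfl
      rw [h1, haTapply]
      simp only [hu, smul_sub, Submodule.coe_smul]
      rw [Finset.sum_sub_distrib]
      abel
    have hw2 : A w = A ⟨aT c, h⟩ + ∑ i, c i • ((X i : H × H)).2 := by
      rw [hw, A.map_add, hs, hAlin]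
      congr 1
      exact Finset.sum_congr rfl fun i _ => by rw [hAY i]
    have hwM : A w ∈ M := by
      rw [hMinner]
      intro j
      rw [hw2, inner_add_right, inner_sum]
      simp only [inner_smul_right]
      rw [← hyp' j, hκvec c j]
      ring
    have hwG : ((w : H), A w) ∈ G := by
      have h0 := (hMmem (A w)).1 hwM
      rwa [hAinv1 w] at h0
    have hwL : ((w : H), A w) ∈ L.graph := (Submodule.mem_inf.1 hwG).2
    have hZ1 : ((∑ i, c i • X i : ↥L.graph) : H × H).1 = (w : H) := by
      rw [hXsum1, hw1]
    have hZ2 : ((∑ i, c i • X i : ↥L.graph) : H × H).2 = A w - A ⟨aT c, h⟩ := by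
      rw [hXsum2, hw2]; abel
    have hdiff : (((w : H), A w) - ((∑ i, c i • X i : ↥L.graph) : H × H)) ∈ L.graph :=
      Submodule.sub_mem _ hwL (∑ i, c i • X i : ↥L.graph).2
    have hdiffval : (((w : H), A w) - ((∑ i, c i • X i : ↥L.graph) : H × H))
        = ((0 : H), A ⟨aT c, h⟩) := by
      apply Prod.ext
      · rw [Prod.fst_sub, hZ1]; simp
      · rw [Prod.snd_sub, hZ2]; simp
    have hzero : A ⟨aT c, h⟩ = 0 := by
      rw [hdiffval] at hdiff
      obtain ⟨y, hy1, hy2⟩ := L.mem_graph_iff.1 hdiff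
      have hy0 : y = 0 := Subtype.ext (by simpa using hy1)
      have hy2' : L y = A ⟨aT c, h⟩ := hy2
      rw [← hy2', hy0, L.map_zero]
    have hZval : ((∑ i, c i • X i : ↥L.graph) : H × H) = ((w : H), A w) := by
      apply Prod.ext
      · rw [hZ1]
      · rw [hZ2, hzero, sub_zero]
    exact hXA c w hZval
  refine ⟨aT, bT, κ, hainj, hbinj, hcond, ?_⟩
  ext p
  constructor
  · intro hp
    set ξ : ↥L.graph := ⟨p, hp⟩ with hξ
    set c : Fin n → ℂ := qB.equivFun (K.mkQ ξ) with hc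
    have hsumq : ∑ i, c i • qB i = K.mkQ ξ := qB.sum_equivFun (K.mkQ ξ)
    have hmk0 : K.mkQ (ξ - ∑ i, c i • X i) = 0 := by
      rw [map_sub, map_sum]
      simp only [map_smul, hX]
      rw [hsumq, sub_self]
    have hgK : (ξ - ∑ i, c i • X i) ∈ K := (Submodule.Quotient.mk_eq_zero K).1 hmk0
    have hgKA : ((ξ - ∑ i, c i • X i : ↥L.graph) : H × H) ∈ A.graph :=
      (Submodule.mem_inf.1 (Submodule.mem_comap.1 hgK)).2
    obtain ⟨yg, hyg1, hyg2⟩ := A.mem_graph_iff.1 hgKA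
    have hDval1 : ((ξ - ∑ i, c i • X i : ↥L.graph) : H × H).1
        = p.1 - ∑ i, c i • ((X i : H × H)).1 := by
      rw [Submodule.coe_sub, Prod.fst_sub, hXsum1]
    have hDval2 : ((ξ - ∑ i, c i • X i : ↥L.graph) : H × H).2
        = p.2 - ∑ i, c i • ((X i : H × H)).2 := by
      rw [Submodule.coe_sub, Prod.snd_sub, hXsum2]
    refine ⟨yg + ∑ i, c i • Y i, c, ?_, ?_, ?_⟩
    · rw [Submodule.coe_add, Submodule.coe_sum]
      simp only [Submodule.coe_smul]
      rw [haTapply]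
      simp only [hu, smul_sub]
      rw [Finset.sum_sub_distrib]
      have h1 : (yg : H) = p.1 - ∑ i, c i • ((X i : H × H)).1 := by rw [hyg1, hDval1]
      rw [h1]; abel
    · beta_reduce
      rw [A.map_add, hAlin]
      have h2 : A yg = p.2 - ∑ i, c i • ((X i : H × H)).2 := by rw [hyg2, hDval2]
      rw [h2]
      have h3 : ∑ i, c i • A (Y i) = ∑ i, c i • ((X i : H × H)).2 :=
        Finset.sum_congr rfl fun i _ => by rw [hAY i]
      rw [h3]; abel
    · intro j
      beta_reduce
      rw [hbTsingle j, A.map_add, hAlin, inner_add_right, inner_sum]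
      simp only [inner_smul_right]
      have hDM : A yg ∈ M := by
        refine ⟨((ξ - ∑ i, c i • X i : ↥L.graph) : H × H), ?_, ?_⟩
        · exact Submodule.mem_inf.2 ⟨hgKA, (ξ - ∑ i, c i • X i).2⟩
        · rw [LinearMap.snd_apply, ← hyg2]
      have hz := (hMinner (A yg)).1 hDM j
      rw [hz, hκvec c j]
      have hAYs : ∀ i, inner (𝕜 := ℂ) ((bB j : H)) (A (Y i))
          = inner (𝕜 := ℂ) ((bB j : H)) (((X i) : H × H).2) := fun i => by rw [hAY i]
      simp only [hAYs]
      ring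
  · rintro ⟨y₀, c, h1, h2, h3⟩
    beta_reduce at h2 h3
    set y' : A.domain := y₀ - ∑ i, c i • Y i with hy'
    have hAy' : A y' = A y₀ - ∑ i, c i • ((X i : H × H)).2 := by
      rw [hy', A.map_sub, hAlin]
      congr 1
      exact Finset.sum_congr rfl fun i _ => by rw [hAY i]
    have hy'M : A y' ∈ M := by
      rw [hMinner]
      intro j
      rw [hAy', inner_sub_right, inner_sum]
      simp only [inner_smul_right]
      have h3' := h3 j
      rw [hbTsingle j] at h3'
      rw [hκvec c j] at h3'
      linear_combination h3'
    have hy'G : ((y' : H), A y') ∈ G := by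
      have h0 := (hMmem (A y')).1 hy'M
      rwa [hAinv1 y'] at h0
    have hy'L : ((y' : H), A y') ∈ L.graph := (Submodule.mem_inf.1 hy'G).2
    have hpeq : p = (((y' : H), A y') + ∑ i, c i • ((X i : H × H))) := by
      apply Prod.ext
      · rw [Prod.fst_add, Prod.fst_sum]
        have hfs : ∑ i, (c i • ((X i : H × H))).1 = ∑ i, c i • ((X i : H × H)).1 :=
          Finset.sum_congr rfl fun i _ => by rw [Prod.smul_fst]
        rw [hfs, h1, haTapply]
        rw [hy', Submodule.coe_sub, Submodule.coe_sum]
        simp only [Submodule.coe_smul, hu, smul_sub]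
        rw [Finset.sum_sub_distrib]
        abel
      · rw [Prod.snd_add, Prod.snd_sum]
        have hss : ∑ i, (c i • ((X i : H × H))).2 = ∑ i, c i • ((X i : H × H)).2 :=
          Finset.sum_congr rfl fun i _ => by rw [Prod.smul_snd]
        rw [hss, h2, hAy']
        exact (sub_add_cancel _ _).symm
    rw [hpeq]
    exact L.graph.add_mem hy'L
      (Submodule.sum_mem _ fun i _ => L.graph.smul_mem _ (X i).2)

/-- **Proposition.** (1) For each n-data `(a,b,κ)` for `A`, the operator `L(A,a,b,κ)` is a
balanced rank `n` singular perturbation of `A`; (2) conversely, every balanced rank `n`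
singular perturbation of `A` has the form `L(A,a,b,κ)` for some n-data. -/
theorem pert_balanced_iff_n_data
    (n : ℕ) (A : H →ₗ.[ℂ] H)
    (hdense : Dense (A.domain : Set H))
    (hclosed : IsClosed (A.graph : Set (H × H)))
    -- 0 lies in the resolvent set of A
    (Ainv : H →L[ℂ] H)
    (hAinv1 : ∀ x : A.domain, Ainv (A x) = (x : H))
    (hAinv2 : ∀ v : H, ∃ h : Ainv v ∈ A.domain, A ⟨Ainv v, h⟩ = v) :
    -- (1)
    (∀ (aT bT : (Fin n → ℂ) →ₗ[ℂ] H) (κ : Matrix (Fin n) (Fin n) ℂ),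
      Function.Injective aT → Function.Injective bT → CondA n A aT bT κ →
      ∃ L : H →ₗ.[ℂ] H,
        (L.graph : Set (H × H)) = pertGraph n A.domain (fun y₀ => A y₀) aT bT κ ∧
        IsBalancedPert n A.graph L.graph) ∧
    -- (2)
    (∀ L : H →ₗ.[ℂ] H, IsClosed (L.graph : Set (H × H)) →
      IsBalancedPert n A.graph L.graph →
      ∃ (aT bT : (Fin n → ℂ) →ₗ[ℂ] H) (κ : Matrix (Fin n) (Fin n) ℂ),
        Function.Injective aT ∧ Function.Injective bT ∧ CondA n A aT bT κ ∧
        (L.graph : Set (H × H)) = pertGraph n A.domain (fun y₀ => A y₀) aT bT κ) := by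
  constructor
  · intro aT bT κ ha hb hcond
    obtain ⟨L, h1, h2, h3⟩ := part1_main A Ainv hAinv1 hAinv2 aT bT κ ha hb hcond
    exact ⟨L, h1, h2, h3⟩
  · intro L hLc hbal
    exact part2_main A hclosed Ainv hAinv1 hAinv2 L hLc hbal.1 hbal.2

end
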